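/- With k = 1: let v = q + c0 u0 + c1 u1 + c2 u2, where q : ℝ² → ℝ is a polynomial of degree ≤ 2 and c0, c1, c2 ∈ ℝ. If v(vi) = 0 and the total derivative of v vanishes at vi for i = 0, 1, 2, then v(x) = 0 for all x ∈ T; equivalently q ≡ 0 and c0 = c1 = c2 = 0. That is, a function in U2(T) = P2(T) ⊕ span{u0, u1, u2} is uniquely determined by its values and gradients at the three vertices of T. -/

import Mathlib

noncomputable section

open Matrix MeasureTheory

abbrev Vec2 : Type := Fin 2 → ℝ

/-- Euclidean dot product on `ℝ²`. -/
def dot2 (a b : Vec2) : ℝ := a 0 * b 0 + a 1 * b 1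

/-- Partial derivative of `f` in the `i`-th coordinate direction. -/
def pd (i : Fin 2) (f : Vec2 → ℝ) (x : Vec2) : ℝ := fderiv ℝ f x (Pi.single i 1)

/-- The matrix `a bᵀ`. -/
def outer (a b : Vec2) : Matrix (Fin 2) (Fin 2) ℝ := fun i j => a i * b j

/-- `sym(a ⊗ b) = (a bᵀ + b aᵀ)/2`. -/
def symOuter (a b : Vec2) : Matrix (Fin 2) (Fin 2) ℝ := (1 / 2 : ℝ) • (outer a b + outer b a)

/-- The Airy operator (rotated Hessian)
`J(f) = [[∂²f/∂x₂², −∂²f/∂x₁∂x₂], [−∂²f/∂x₁∂x₂, ∂²f/∂x₁²]]`. -/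
def airy (f : Vec2 → ℝ) (x : Vec2) : Matrix (Fin 2) (Fin 2) ℝ :=
  !![pd 1 (pd 1 f) x, -(pd 0 (pd 1 f) x); -(pd 0 (pd 1 f) x), pd 0 (pd 0 f) x]

/-- `f` is the evaluation function of a real polynomial in two variables of total degree ≤ m. -/
def IsPolyDeg (m : ℕ) (f : Vec2 → ℝ) : Prop :=
  ∃ P : MvPolynomial (Fin 2) ℝ, P.totalDegree ≤ m ∧ ∀ x, f x = MvPolynomial.eval x P

/-- `f` is the evaluation function of a real polynomial in two variables. -/
def IsPolyFun (f : Vec2 → ℝ) : Prop :=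
  ∃ P : MvPolynomial (Fin 2) ℝ, ∀ x, f x = MvPolynomial.eval x P

/-- `λᵢᴿ = λᵢ − min(λ₀, λ₁, λ₂)`: hat function of vertex `vᵢ` on the barycentric refinement. -/
def lamR (lam : Fin 3 → Vec2 → ℝ) (i : Fin 3) (x : Vec2) : ℝ :=
  lam i x - min (lam 0 x) (min (lam 1 x) (lam 2 x))

/-- `x ∈ Ωⱼ`: the region where `λⱼ` is the strict minimum of the barycentric coordinates. -/
def inReg (lam : Fin 3 → Vec2 → ℝ) (j : Fin 3) (x : Vec2) : Prop :=
  ∀ i : Fin 3, i ≠ j → lam j x < lam i x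

/-- The branch formula of `ψᵢ` on `Ω_{i+2}`. -/
def psiA (lam : Fin 3 → Vec2 → ℝ) (tc : Fin 3 → Vec2) (k : ℕ) (i : Fin 3) (x : Vec2) :
    Matrix (Fin 2) (Fin 2) ℝ :=
  (2 * (lam i x - lam (i + 2) x) ^ k) • symOuter (tc i) (tc (i + 1)) -
    ((k : ℝ) * (lam i x - lam (i + 2) x) ^ (k - 1) * (lam (i + 1) x - lam (i + 2) x)) •
      outer (tc (i + 1)) (tc (i + 1))

/-- The branch formula of `ψᵢ` on `Ω_{i+1}`. -/
def psiB (lam : Fin 3 → Vec2 → ℝ) (tc : Fin 3 → Vec2) (k : ℕ) (i : Fin 3) (x : Vec2) :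
    Matrix (Fin 2) (Fin 2) ℝ :=
  -((2 * (lam i x - lam (i + 1) x) ^ k) • symOuter (tc i) (tc (i + 2))) +
    ((k : ℝ) * (lam i x - lam (i + 1) x) ^ (k - 1) * (lam (i + 2) x - lam (i + 1) x)) •
      outer (tc (i + 2)) (tc (i + 2))

open Classical in
/-- The piecewise enrichment stress `ψᵢ`. -/
def psiFun (lam : Fin 3 → Vec2 → ℝ) (tc : Fin 3 → Vec2) (k : ℕ) (i : Fin 3) (x : Vec2) :
    Matrix (Fin 2) (Fin 2) ℝ :=
  if inReg lam (i + 2) x then psiA lam tc k i x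
  else if inReg lam (i + 1) x then psiB lam tc k i x
  else 0

/-- The `Ωⱼ`-branch polynomial formula of `ψᵢ` (value used on the closed edge `eⱼ`). -/
def psiEdge (lam : Fin 3 → Vec2 → ℝ) (tc : Fin 3 → Vec2) (k : ℕ) (i j : Fin 3) (x : Vec2) :
    Matrix (Fin 2) (Fin 2) ℝ :=
  if j = i + 2 then psiA lam tc k i x
  else if j = i + 1 then psiB lam tc k i x
  else 0

/-- The Airy potential `vᵢ = (4|T|²/(9(k+1))) (λᵢᴿ)^{k+1} (λ_{i+2} − λ_{i+1})`. -/
def vEnrich (lam : Fin 3 → Vec2 → ℝ) (area : ℝ) (k : ℕ) (i : Fin 3) (x : Vec2) : ℝ :=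
  4 * area ^ 2 / (9 * (k + 1)) * (lamR lam i x) ^ (k + 1) * (lam (i + 2) x - lam (i + 1) x)

/-- `v_{i,i+1} = (C_T/(k+1))[(λᵢᴿ)^{k+1} − λᵢ^{k+1}](λ_{i+2} − λ_{i+1}) − C_T λᵢ^k λ_{i+1} λ_{i+2}`. -/
def vE1 (lam : Fin 3 → Vec2 → ℝ) (area : ℝ) (k : ℕ) (i : Fin 3) (x : Vec2) : ℝ :=
  4 * area ^ 2 / 9 / (k + 1) * ((lamR lam i x) ^ (k + 1) - (lam i x) ^ (k + 1)) *
      (lam (i + 2) x - lam (i + 1) x) -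
    4 * area ^ 2 / 9 * (lam i x) ^ k * lam (i + 1) x * lam (i + 2) x

/-- `v_{i,i+2} = (C_T/(k+1))[(λᵢᴿ)^{k+1} − λᵢ^{k+1}](λ_{i+2} − λ_{i+1}) + C_T λᵢ^k λ_{i+1} λ_{i+2}`. -/
def vE2 (lam : Fin 3 → Vec2 → ℝ) (area : ℝ) (k : ℕ) (i : Fin 3) (x : Vec2) : ℝ :=
  4 * area ^ 2 / 9 / (k + 1) * ((lamR lam i x) ^ (k + 1) - (lam i x) ^ (k + 1)) *
      (lam (i + 2) x - lam (i + 1) x) +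
    4 * area ^ 2 / 9 * (lam i x) ^ k * lam (i + 1) x * lam (i + 2) x

/-- `wᵢ = (1/(4 C_T c_{i,i})) (v_{i+1,i} − v_{i+2,i})`, with `k = 1`. -/
def wFun (lam : Fin 3 → Vec2 → ℝ) (g : Fin 3 → Vec2) (n : Fin 3 → Vec2) (area : ℝ)
    (i : Fin 3) (x : Vec2) : ℝ :=
  1 / (4 * (4 * area ^ 2 / 9) * dot2 (g i) (n i)) *
    (vE2 lam area 1 (i + 1) x - vE1 lam area 1 (i + 2) x)

/-- `sᵢ = λ_{i+1} λ_{i+2} (λ_{i+1} − λ_{i+2})`. -/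
def sFun (lam : Fin 3 → Vec2 → ℝ) (i : Fin 3) (x : Vec2) : ℝ :=
  lam (i + 1) x * lam (i + 2) x * (lam (i + 1) x - lam (i + 2) x)

/-- `uᵢ = sᵢ − 3(c_{i+1,i} − c_{i+2,i}) wᵢ − c_{i+1,i+1} w_{i+1} + c_{i+2,i+2} w_{i+2}`. -/
def uFun (lam : Fin 3 → Vec2 → ℝ) (g : Fin 3 → Vec2) (n : Fin 3 → Vec2) (area : ℝ)
    (i : Fin 3) (x : Vec2) : ℝ :=
  sFun lam i x - 3 * (dot2 (g (i + 1)) (n i) - dot2 (g (i + 2)) (n i)) * wFun lam g n area i x -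
    dot2 (g (i + 1)) (n (i + 1)) * wFun lam g n area (i + 1) x +
    dot2 (g (i + 2)) (n (i + 2)) * wFun lam g n area (i + 2) x

/-- The closed triangle `T = conv{v₀, v₁, v₂}`. -/
def Tset (v : Fin 3 → Vec2) : Set Vec2 := convexHull ℝ {v 0, v 1, v 2}

/-- The closed edge `eⱼ` of `T` opposite the vertex `vⱼ`. -/
def edgeSeg (v : Fin 3 → Vec2) (j : Fin 3) : Set Vec2 := segment ℝ (v (j + 1)) (v (j + 2))

/-- `det(v₁ − v₀, v₂ − v₀)`. -/
def detT (v : Fin 3 → Vec2) : ℝ :=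
  (v 1 0 - v 0 0) * (v 2 1 - v 0 1) - (v 1 1 - v 0 1) * (v 2 0 - v 0 0)

/-! ### Auxiliary definitions and lemmas for the unisolvence proof -/

open Asymptotics

/-- The dot-product linear functional as a continuous linear map. -/
def Lc (a : Vec2) : Vec2 →L[ℝ] ℝ :=
  a 0 • (ContinuousLinearMap.proj (R := ℝ) (φ := fun _ : Fin 2 => ℝ) 0) +
  a 1 • (ContinuousLinearMap.proj (R := ℝ) (φ := fun _ : Fin 2 => ℝ) 1)

lemma Lc_apply (a x : Vec2) : Lc a x = a 0 * x 0 + a 1 * x 1 := by simp [Lc]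

lemma hasFDerivAt_dot2 (a x : Vec2) : HasFDerivAt (fun y => dot2 a y) (Lc a) x := by
  have h : (fun y => dot2 a y) = ⇑(Lc a) := by
    funext y; rw [Lc_apply]; rfl
  rw [h]; exact (Lc a).hasFDerivAt

lemma abs_dot2_le (a y : Vec2) : |dot2 a y| ≤ (|a 0| + |a 1|) * ‖y‖ := by
  have h0 : |y 0| ≤ ‖y‖ := by simpa [Real.norm_eq_abs] using norm_le_pi_norm y 0
  have h1 : |y 1| ≤ ‖y‖ := by simpa [Real.norm_eq_abs] using norm_le_pi_norm y 1
  calc |dot2 a y| ≤ |a 0 * y 0| + |a 1 * y 1| := abs_add_le _ _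
    _ = |a 0| * |y 0| + |a 1| * |y 1| := by rw [abs_mul, abs_mul]
    _ ≤ |a 0| * ‖y‖ + |a 1| * ‖y‖ := by gcongr
    _ = (|a 0| + |a 1|) * ‖y‖ := by ring

lemma dot2_sub (a x p : Vec2) : dot2 a (x - p) = dot2 a x - dot2 a p := by
  simp [dot2]; ring

/-- `min(λ₀,λ₁,λ₂)`. -/
def mmin (lam : Fin 3 → Vec2 → ℝ) (x : Vec2) : ℝ := min (lam 0 x) (min (lam 1 x) (lam 2 x))

def Ffn (lam : Fin 3 → Vec2 → ℝ) (r : Fin 3) (x : Vec2) : ℝ :=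
  (mmin lam x - 2 * lam (r+1) x) * (lam r x - lam (r+2) x) +
  (mmin lam x - 2 * lam (r+2) x) * (lam r x - lam (r+1) x)

def bb (lam : Fin 3 → Vec2 → ℝ) (x : Vec2) : ℝ := lam 0 x * lam 1 x * lam 2 x

lemma w_eq (lam : Fin 3 → Vec2 → ℝ) (g n : Fin 3 → Vec2) (area : ℝ) (r : Fin 3) (x : Vec2) :
    wFun lam g n area r x = (1 / (4 * (4*area^2/9) * dot2 (g r) (n r))) *
      ((4*area^2/9)/2 * (mmin lam x * Ffn lam r x) + 2*(4*area^2/9) * (bb lam x)) := by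
  have h3 : (3 : Fin 3) = 0 := rfl
  have h4 : (4 : Fin 3) = 1 := rfl
  fin_cases r <;>
  · simp only [wFun, vE1, vE2, lamR, mmin, Ffn, bb, Fin.isValue, Fin.reduceAdd, Fin.zero_eta,
      Fin.mk_one, Fin.reduceFinMk, h3, h4, Nat.cast_one]
    push_cast
    ring

lemma mmin_isBigO (lam : Fin 3 → Vec2 → ℝ) (g : Fin 3 → Vec2) (cst : Fin 3 → ℝ)
    (hlam : ∀ i x, lam i x = dot2 (g i) x + cst i) (p : Vec2) (hp : mmin lam p = 0) :
    (fun x => mmin lam x) =O[nhds p] (fun x => ‖x - p‖) := by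
  rw [isBigO_iff]
  refine ⟨(|g 0 0| + |g 0 1|) + ((|g 1 0| + |g 1 1|) + (|g 2 0| + |g 2 1|)),
    Filter.Eventually.of_forall fun x => ?_⟩
  have hd : ∀ i, |lam i x - lam i p| ≤ (|g i 0| + |g i 1|) * ‖x - p‖ := by
    intro i
    have : lam i x - lam i p = dot2 (g i) (x - p) := by
      rw [hlam, hlam, dot2_sub]; ring
    rw [this]; exact abs_dot2_le _ _
  have key : |mmin lam x - mmin lam p| ≤
      max (|lam 0 x - lam 0 p|) (max (|lam 1 x - lam 1 p|) (|lam 2 x - lam 2 p|)) := by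
    refine le_trans (abs_min_sub_min_le_max _ _ _ _) ?_
    exact max_le_max le_rfl (abs_min_sub_min_le_max _ _ _ _)
  have h2 : |mmin lam x| ≤
      max (|lam 0 x - lam 0 p|) (max (|lam 1 x - lam 1 p|) (|lam 2 x - lam 2 p|)) := by
    rw [hp, sub_zero] at key; exact key
  simp only [Real.norm_eq_abs, norm_norm]
  calc |mmin lam x| ≤ _ := h2
    _ ≤ ((|g 0 0| + |g 0 1|) + ((|g 1 0| + |g 1 1|) + (|g 2 0| + |g 2 1|))) * ‖x - p‖ := by
        refine max_le (le_trans (hd 0) ?_) (max_le (le_trans (hd 1) ?_) (le_trans (hd 2) ?_)) <;>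
          nlinarith [abs_nonneg (g 0 0), abs_nonneg (g 0 1), abs_nonneg (g 1 0),
            abs_nonneg (g 1 1), abs_nonneg (g 2 0), abs_nonneg (g 2 1), norm_nonneg (x - p)]
    _ = _ := by rw [abs_norm]

lemma hasFDerivAt_mul_vanish {m F : Vec2 → ℝ} {p : Vec2}
    (hm : (fun x => m x) =O[nhds p] (fun x => ‖x - p‖)) (hm0 : m p = 0)
    (hF : ContinuousAt F p) (hF0 : F p = 0) :
    HasFDerivAt (fun x => m x * F x) (0 : Vec2 →L[ℝ] ℝ) p := by
  have hFo : (fun x => F x) =o[nhds p] (fun _ => (1:ℝ)) := by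
    rw [isLittleO_one_iff]; rw [← hF0]; exact hF
  have h := hm.mul_isLittleO hFo
  simp only [mul_one] at h
  have h2 : (fun x => m x * F x) =o[nhds p] (fun x => x - p) := by
    rw [← isLittleO_norm_right] at h ⊢
    simpa using h
  have : HasFDerivAt (fun x => m x * F x) (0 : Vec2 →L[ℝ] ℝ) p := by
    refine .of_isLittleO ?_
    simpa [hm0] using h2
  exact this

lemma isPolyDeg2_rep {q : Vec2 → ℝ} (hq : IsPolyDeg 2 q) :
    ∃ A B0 B1 C00 C01 C11 : ℝ, ∀ x : Vec2,
      q x = A + B0 * x 0 + B1 * x 1 + C00 * x 0 ^ 2 + C01 * (x 0 * x 1) + C11 * x 1 ^ 2 := by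
  obtain ⟨P, hdeg, hx⟩ := hq
  have hsupp : ∀ d ∈ P.support, d 0 + d 1 ≤ 2 := by
    intro d hd
    have h1 := MvPolynomial.le_totalDegree hd
    have h2 : (d.sum fun _ e => e) = d 0 + d 1 := by
      rw [Finsupp.sum_fintype _ _ (fun _ => rfl), Fin.sum_univ_two]
    omega
  have key : ∀ s : Finset (Fin 2 →₀ ℕ), (∀ d ∈ s, d 0 + d 1 ≤ 2) →
      ∃ A B0 B1 C00 C01 C11 : ℝ, ∀ x : Vec2,
        (∑ d ∈ s, MvPolynomial.coeff d P * (x 0 ^ d 0 * x 1 ^ d 1)) =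
          A + B0 * x 0 + B1 * x 1 + C00 * x 0 ^ 2 + C01 * (x 0 * x 1) + C11 * x 1 ^ 2 := by
    intro s
    induction s using Finset.induction with
    | empty => exact fun _ => ⟨0,0,0,0,0,0, fun x => by simp⟩
    | @insert a s ha ih =>
      intro hmem
      obtain ⟨A,B0,B1,C00,C01,C11,h⟩ := ih (fun d hd => hmem d (Finset.mem_insert_of_mem hd))
      have hab : a 0 + a 1 ≤ 2 := hmem a (Finset.mem_insert_self a s)
      set ca := MvPolynomial.coeff a P with hca
      have hrw : ∀ x : Vec2, (∑ d ∈ insert a s, MvPolynomial.coeff d P * (x 0 ^ d 0 * x 1 ^ d 1)) =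
          ca * (x 0 ^ a 0 * x 1 ^ a 1) +
            (A + B0 * x 0 + B1 * x 1 + C00 * x 0 ^ 2 + C01 * (x 0 * x 1) + C11 * x 1 ^ 2) := by
        intro x; rw [Finset.sum_insert ha, h]
      set m := a 0 with hm
      set n := a 1 with hn
      have hm2 : m ≤ 2 := le_trans (Nat.le_add_right _ _) hab
      have hn2 : n ≤ 2 := le_trans (Nat.le_add_left _ _) hab
      clear_value m n
      interval_cases m <;> interval_cases n
      · exact ⟨A + ca, B0, B1, C00, C01, C11, fun x => by rw [hrw x]; ring⟩
      · exact ⟨A, B0, B1 + ca, C00, C01, C11, fun x => by rw [hrw x]; ring⟩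
      · exact ⟨A, B0, B1, C00, C01, C11 + ca, fun x => by rw [hrw x]; ring⟩
      · exact ⟨A, B0 + ca, B1, C00, C01, C11, fun x => by rw [hrw x]; ring⟩
      · exact ⟨A, B0, B1, C00, C01 + ca, C11, fun x => by rw [hrw x]; ring⟩
      · exact absurd hab (by omega)
      · exact ⟨A, B0, B1, C00 + ca, C01, C11, fun x => by rw [hrw x]; ring⟩
      · exact absurd hab (by omega)
      · exact absurd hab (by omega)
  obtain ⟨A,B0,B1,C00,C01,C11,h⟩ := key P.support hsupp
  refine ⟨A,B0,B1,C00,C01,C11, fun x => ?_⟩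
  rw [hx x, MvPolynomial.eval_eq', ← h x]
  exact Finset.sum_congr rfl fun d _ => by rw [Fin.prod_univ_two]

lemma hasFDerivAt_coord (i : Fin 2) (x : Vec2) :
    HasFDerivAt (fun y : Vec2 => y i) (ContinuousLinearMap.proj (R := ℝ) (φ := fun _ : Fin 2 => ℝ) i) x :=
  (ContinuousLinearMap.proj (R := ℝ) (φ := fun _ : Fin 2 => ℝ) i).hasFDerivAt

lemma hasFDerivAt_quad (A B0 B1 C00 C01 C11 : ℝ) (x : Vec2) :
    HasFDerivAt (fun y : Vec2 => A + B0 * y 0 + B1 * y 1 + C00 * y 0 ^ 2 + C01 * (y 0 * y 1) + C11 * y 1 ^ 2)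
      (Lc ![B0 + 2*C00*x 0 + C01 * x 1, B1 + C01 * x 0 + 2*C11*x 1]) x := by
  have h0 := hasFDerivAt_coord 0 x
  have h1 := hasFDerivAt_coord 1 x
  have h := ((((hasFDerivAt_const A x).add (h0.const_mul B0)).add (h1.const_mul B1)).add
      ((h0.mul h0).const_mul C00)).add ((h0.mul h1).const_mul C01) |>.add ((h1.mul h1).const_mul C11)
  refine (h.congr_fderiv ?_).congr_of_eventuallyEq (Filter.Eventually.of_forall fun y => ?_)
  · ext z
    simp [Lc_apply]
    ring
  · simp only [Pi.add_apply, Pi.mul_apply]; ring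


section Derivs

variable {v : Fin 3 → Vec2} {lam : Fin 3 → Vec2 → ℝ} {g : Fin 3 → Vec2} {cst : Fin 3 → ℝ}

lemma lam_cont (hlam : ∀ i x, lam i x = dot2 (g i) x + cst i) (i : Fin 3) :
    Continuous (lam i) := by
  have : lam i = fun x => (g i 0 * x 0 + g i 1 * x 1) + cst i := by
    funext x; rw [hlam]; rfl
  rw [this]
  exact ((continuous_const.mul (continuous_apply (0 : Fin 2))).add
    (continuous_const.mul (continuous_apply (1 : Fin 2)))).add continuous_const

lemma hasFDerivAt_lam (hlam : ∀ i x, lam i x = dot2 (g i) x + cst i) (i : Fin 3) (x : Vec2) :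
    HasFDerivAt (lam i) (Lc (g i)) x := by
  have h : lam i = fun y => dot2 (g i) y + cst i := funext (hlam i)
  rw [h]
  exact (hasFDerivAt_dot2 (g i) x).add_const (cst i)

lemma mmin_val (hdelta : ∀ i j, lam i (v j) = if i = j then 1 else 0) (j : Fin 3) :
    mmin lam (v j) = 0 := by
  fin_cases j <;> simp only [mmin, hdelta, Fin.isValue, Fin.zero_eta, Fin.mk_one, Fin.reduceFinMk, Fin.reduceAdd, Fin.reduceEq, reduceIte] <;> norm_num

lemma bb_val (hdelta : ∀ i j, lam i (v j) = if i = j then 1 else 0) (j : Fin 3) :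
    bb lam (v j) = 0 := by
  fin_cases j <;> simp only [bb, hdelta, Fin.isValue, Fin.zero_eta, Fin.mk_one, Fin.reduceFinMk, Fin.reduceAdd, Fin.reduceEq, reduceIte] <;> norm_num

lemma Ffn_val (hdelta : ∀ i j, lam i (v j) = if i = j then 1 else 0) (r j : Fin 3) :
    Ffn lam r (v j) = 0 := by
  fin_cases r <;> fin_cases j <;> simp only [Ffn, mmin, hdelta, Fin.isValue, Fin.zero_eta, Fin.mk_one, Fin.reduceFinMk, Fin.reduceAdd, Fin.reduceEq, reduceIte] <;> norm_num

lemma w_val (hdelta : ∀ i j, lam i (v j) = if i = j then 1 else 0)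
    (nn : Fin 3 → Vec2) (area : ℝ) (r j : Fin 3) :
    wFun lam g nn area r (v j) = 0 := by
  rw [w_eq, mmin_val hdelta, bb_val hdelta]
  ring

lemma s_val (hdelta : ∀ i j, lam i (v j) = if i = j then 1 else 0) (i j : Fin 3) :
    sFun lam i (v j) = 0 := by
  fin_cases i <;> fin_cases j <;> simp only [sFun, hdelta, Fin.isValue, Fin.zero_eta, Fin.mk_one, Fin.reduceFinMk, Fin.reduceAdd, Fin.reduceEq, reduceIte] <;> norm_num

lemma u_val (hdelta : ∀ i j, lam i (v j) = if i = j then 1 else 0)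
    (nn : Fin 3 → Vec2) (area : ℝ) (i j : Fin 3) :
    uFun lam g nn area i (v j) = 0 := by
  unfold uFun
  rw [s_val hdelta, w_val hdelta, w_val hdelta, w_val hdelta]
  ring

lemma hasFDerivAt_bb (hlam : ∀ i x, lam i x = dot2 (g i) x + cst i)
    (hdelta : ∀ i j, lam i (v j) = if i = j then 1 else 0) (j : Fin 3) :
    HasFDerivAt (bb lam) (0 : Vec2 →L[ℝ] ℝ) (v j) := by
  have h := ((hasFDerivAt_lam hlam 0 (v j)).mul (hasFDerivAt_lam hlam 1 (v j))).mul
    (hasFDerivAt_lam hlam 2 (v j))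
  simp only [Pi.mul_apply] at h
  have hE : (lam 0 (v j) * lam 1 (v j)) • Lc (g 2) +
      lam 2 (v j) • (lam 0 (v j) • Lc (g 1) + lam 1 (v j) • Lc (g 0)) = (0 : Vec2 →L[ℝ] ℝ) := by
    refine ContinuousLinearMap.ext fun y => ?_
    fin_cases j <;> simp only [hdelta, Fin.isValue, Fin.zero_eta, Fin.mk_one, Fin.reduceFinMk, Fin.reduceAdd, Fin.reduceEq, reduceIte, ContinuousLinearMap.add_apply, ContinuousLinearMap.smul_apply, ContinuousLinearMap.sub_apply, ContinuousLinearMap.zero_apply, Lc_apply, smul_eq_mul] <;> ring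
  rw [hE] at h
  exact h

lemma hasFDerivAt_w (hlam : ∀ i x, lam i x = dot2 (g i) x + cst i)
    (hdelta : ∀ i j, lam i (v j) = if i = j then 1 else 0)
    (nn : Fin 3 → Vec2) (area : ℝ) (r j : Fin 3) :
    HasFDerivAt (wFun lam g nn area r) (0 : Vec2 →L[ℝ] ℝ) (v j) := by
  have hfe : wFun lam g nn area r = fun x =>
      ((1 / (4 * (4*area^2/9) * dot2 (g r) (nn r))) * ((4*area^2/9)/2)) *
        (mmin lam x * Ffn lam r x) +
      ((1 / (4 * (4*area^2/9) * dot2 (g r) (nn r))) * (2*(4*area^2/9))) * bb lam x := by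
    funext x; rw [w_eq]; ring
  rw [hfe]
  have hmc : Continuous (mmin lam) :=
    (lam_cont hlam 0).min ((lam_cont hlam 1).min (lam_cont hlam 2))
  have hFc : Continuous (Ffn lam r) := by
    unfold Ffn
    exact ((hmc.sub (continuous_const.mul (lam_cont hlam (r+1)))).mul
        ((lam_cont hlam r).sub (lam_cont hlam (r+2)))).add
      ((hmc.sub (continuous_const.mul (lam_cont hlam (r+2)))).mul
        ((lam_cont hlam r).sub (lam_cont hlam (r+1))))
  have hmf := hasFDerivAt_mul_vanish
    (mmin_isBigO lam g cst hlam (v j) (mmin_val hdelta j)) (mmin_val hdelta j)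
    hFc.continuousAt (Ffn_val hdelta r j)
  have h := (hmf.const_mul ((1 / (4 * (4*area^2/9) * dot2 (g r) (nn r))) * ((4*area^2/9)/2))).add
    ((hasFDerivAt_bb hlam hdelta j).const_mul
      ((1 / (4 * (4*area^2/9) * dot2 (g r) (nn r))) * (2*(4*area^2/9))))
  simp only [smul_zero, add_zero] at h
  exact h

/-- Derivative of `sᵢ` (and of `uᵢ`) at the vertex `vⱼ`. -/
def Dclm (g : Fin 3 → Vec2) (i j : Fin 3) : Vec2 →L[ℝ] ℝ :=
  (if j = i+1 then (1:ℝ) else 0) • Lc (g (i+2)) + (if j = i+2 then (-1:ℝ) else 0) • Lc (g (i+1))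

lemma hasFDerivAt_s (hlam : ∀ i x, lam i x = dot2 (g i) x + cst i)
    (hdelta : ∀ i j, lam i (v j) = if i = j then 1 else 0) (i j : Fin 3) :
    HasFDerivAt (sFun lam i) (Dclm g i j) (v j) := by
  have hE : (lam (i+1) (v j) * lam (i+2) (v j)) • (Lc (g (i+1)) - Lc (g (i+2))) +
      (lam (i+1) (v j) - lam (i+2) (v j)) •
        (lam (i+1) (v j) • Lc (g (i+2)) + lam (i+2) (v j) • Lc (g (i+1))) = Dclm g i j := by
    refine ContinuousLinearMap.ext fun y => ?_
    fin_cases i <;> fin_cases j <;> simp only [Dclm, hdelta, Fin.isValue, Fin.zero_eta, Fin.mk_one, Fin.reduceFinMk, Fin.reduceAdd, Fin.reduceEq, reduceIte, ContinuousLinearMap.add_apply, ContinuousLinearMap.smul_apply, ContinuousLinearMap.sub_apply, ContinuousLinearMap.zero_apply, Lc_apply, smul_eq_mul] <;> ring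
  have h := ((hasFDerivAt_lam hlam (i+1) (v j)).mul (hasFDerivAt_lam hlam (i+2) (v j))).mul
    ((hasFDerivAt_lam hlam (i+1) (v j)).sub (hasFDerivAt_lam hlam (i+2) (v j)))
  simp only [Pi.mul_apply, Pi.sub_apply] at h
  rw [hE] at h
  exact h

lemma hasFDerivAt_u (hlam : ∀ i x, lam i x = dot2 (g i) x + cst i)
    (hdelta : ∀ i j, lam i (v j) = if i = j then 1 else 0)
    (nn : Fin 3 → Vec2) (area : ℝ) (i j : Fin 3) :
    HasFDerivAt (uFun lam g nn area i) (Dclm g i j) (v j) := by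
  have h := (((hasFDerivAt_s hlam hdelta i j).sub
      ((hasFDerivAt_w hlam hdelta nn area i j).const_mul
        (3 * (dot2 (g (i+1)) (nn i) - dot2 (g (i+2)) (nn i))))).sub
      ((hasFDerivAt_w hlam hdelta nn area (i+1) j).const_mul (dot2 (g (i+1)) (nn (i+1))))).add
      ((hasFDerivAt_w hlam hdelta nn area (i+2) j).const_mul (dot2 (g (i+2)) (nn (i+2))))
  simp only [smul_zero, sub_zero, add_zero] at h
  exact h

end Derivs

/-- a function `v = q + c₀u₀ + c₁u₁ + c₂u₂` in
`U₂(T) = P₂(T) ⊕ span{u₀,u₁,u₂}` whose values and total derivatives vanish at the three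
vertices vanishes on `T`; equivalently `q ≡ 0` and `c₀ = c₁ = c₂ = 0`. -/
theorem U2_unisolvence
    (v : Fin 3 → Vec2) (hv : AffineIndependent ℝ v)
    (lam : Fin 3 → Vec2 → ℝ) (g : Fin 3 → Vec2) (cst : Fin 3 → ℝ)
    (hlam : ∀ i x, lam i x = dot2 (g i) x + cst i)
    (hdelta : ∀ i j, lam i (v j) = if i = j then 1 else 0)
    (area : ℝ) (harea : area = |detT v| / 2)
    (n : Fin 3 → Vec2) (hn1 : ∀ j, dot2 (n j) (n j) = 1)
    (hn2 : ∀ j, dot2 (n j) (v (j + 2) - v (j + 1)) = 0)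
    (hcc : ∀ j, dot2 (g j) (n j) ≠ 0)
    (q : Vec2 → ℝ) (hq : IsPolyDeg 2 q) (c : Fin 3 → ℝ)
    (vf : Vec2 → ℝ)
    (hvf : ∀ x, vf x = q x + c 0 * uFun lam g n area 0 x + c 1 * uFun lam g n area 1 x +
      c 2 * uFun lam g n area 2 x)
    (hval : ∀ i : Fin 3, vf (v i) = 0)
    (hgrad : ∀ i : Fin 3, fderiv ℝ vf (v i) = 0) :
    (∀ x ∈ Tset v, vf x = 0) ∧ (∀ x, q x = 0) ∧ ∀ i, c i = 0 := by
  classical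
  obtain ⟨A, B0, B1, C00, C01, C11, rep⟩ := isPolyDeg2_rep hq
  -- values of q at the vertices
  have huv : ∀ i j : Fin 3, uFun lam g n area i (v j) = 0 := fun i j => u_val hdelta n area i j
  have hqv : ∀ j : Fin 3, q (v j) = 0 := by
    intro j
    have h := hval j
    rw [hvf (v j), huv 0 j, huv 1 j, huv 2 j] at h
    linarith
  have Q : ∀ j : Fin 3, A + B0 * v j 0 + B1 * v j 1 + C00 * v j 0 ^ 2 + C01 * (v j 0 * v j 1) +
      C11 * v j 1 ^ 2 = 0 := by
    intro j
    have h := hqv j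
    rw [rep (v j)] at h
    exact h
  -- coordinates of the barycentric gradients
  have hG : ∀ i j : Fin 3, g i 0 * v j 0 + g i 1 * v j 1 + cst i = if i = j then 1 else 0 := by
    intro i j
    have h := hdelta i j
    rw [hlam] at h
    simpa [dot2] using h
  have hgd : ∀ i a b : Fin 3, g i 0 * (v a 0 - v b 0) + g i 1 * (v a 1 - v b 1) =
      (if i = a then (1:ℝ) else 0) - (if i = b then 1 else 0) := by
    intro i a b
    linear_combination hG i a - hG i b
  -- the CLM equation at each vertex
  have hqfun : q = fun x : Vec2 => A + B0 * x 0 + B1 * x 1 + C00 * x 0 ^ 2 + C01 * (x 0 * x 1) +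
      C11 * x 1 ^ 2 := funext rep
  have hvffun : vf = fun x => q x + c 0 * uFun lam g n area 0 x + c 1 * uFun lam g n area 1 x +
      c 2 * uFun lam g n area 2 x := funext hvf
  have hDvf : ∀ j : Fin 3, HasFDerivAt vf
      (Lc ![B0 + 2*C00*(v j 0) + C01 * (v j 1), B1 + C01 * (v j 0) + 2*C11*(v j 1)] +
        c 0 • Dclm g 0 j + c 1 • Dclm g 1 j + c 2 • Dclm g 2 j) (v j) := by
    intro j
    rw [hvffun]
    have hq' : HasFDerivAt q
        (Lc ![B0 + 2*C00*(v j 0) + C01 * (v j 1), B1 + C01 * (v j 0) + 2*C11*(v j 1)]) (v j) := by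
      rw [hqfun]; exact hasFDerivAt_quad A B0 B1 C00 C01 C11 (v j)
    exact ((hq'.add ((hasFDerivAt_u hlam hdelta n area 0 j).const_mul (c 0))).add
      ((hasFDerivAt_u hlam hdelta n area 1 j).const_mul (c 1))).add
      ((hasFDerivAt_u hlam hdelta n area 2 j).const_mul (c 2))
  have hE : ∀ j : Fin 3,
      (Lc ![B0 + 2*C00*(v j 0) + C01 * (v j 1), B1 + C01 * (v j 0) + 2*C11*(v j 1)] +
        c 0 • Dclm g 0 j + c 1 • Dclm g 1 j + c 2 • Dclm g 2 j) = 0 := by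
    intro j
    rw [← (hDvf j).fderiv]
    exact hgrad j
  have hEy : ∀ (j : Fin 3) (y : Vec2),
      (B0 + 2*C00*(v j 0) + C01 * (v j 1)) * y 0 + (B1 + C01 * (v j 0) + 2*C11*(v j 1)) * y 1 +
      c 0 * ((if j = 1 then (1:ℝ) else 0) * (g 2 0 * y 0 + g 2 1 * y 1) +
             (if j = 2 then (-1:ℝ) else 0) * (g 1 0 * y 0 + g 1 1 * y 1)) +
      c 1 * ((if j = 2 then (1:ℝ) else 0) * (g 0 0 * y 0 + g 0 1 * y 1) +
             (if j = 0 then (-1:ℝ) else 0) * (g 2 0 * y 0 + g 2 1 * y 1)) +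
      c 2 * ((if j = 0 then (1:ℝ) else 0) * (g 1 0 * y 0 + g 1 1 * y 1) +
             (if j = 1 then (-1:ℝ) else 0) * (g 0 0 * y 0 + g 0 1 * y 1)) = 0 := by
    intro j y
    have h := congrArg (fun (L : Vec2 →L[ℝ] ℝ) => L y) (hE j)
    simp only [Dclm, Fin.isValue, Fin.reduceAdd, ContinuousLinearMap.add_apply,
      ContinuousLinearMap.smul_apply, ContinuousLinearMap.zero_apply, Lc_apply, smul_eq_mul,
      Matrix.cons_val_zero, Matrix.cons_val_one, Matrix.head_cons] at h
    linear_combination h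
  -- the enrichment coefficients vanish
  have hc0 : c 0 = 0 := by
    have e1 := hEy 1 (v 2 - v 1)
    have e2 := hEy 2 (v 2 - v 1)
    simp only [Fin.reduceEq, reduceIte, Pi.sub_apply, one_mul, zero_mul, neg_mul, mul_zero,
      add_zero, zero_add, neg_zero, mul_neg] at e1 e2
    have d2 := hgd 2 2 1
    have d1 := hgd 1 2 1
    have d0 := hgd 0 2 1
    simp only [Fin.reduceEq, reduceIte] at d2 d1 d0
    have hQ1 := Q 1
    have hQ2 := Q 2
    linear_combination (e1 + e2 + 2*hQ1 - 2*hQ2 - c 0 * d2 + c 0 * d1 - (c 1 - c 2) * d0) / 2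
  have hc1 : c 1 = 0 := by
    have e1 := hEy 2 (v 0 - v 2)
    have e2 := hEy 0 (v 0 - v 2)
    simp only [Fin.reduceEq, reduceIte, Pi.sub_apply, one_mul, zero_mul, neg_mul, mul_zero,
      add_zero, zero_add, neg_zero, mul_neg] at e1 e2
    have d2 := hgd 2 0 2
    have d1 := hgd 1 0 2
    have d0 := hgd 0 0 2
    simp only [Fin.reduceEq, reduceIte] at d2 d1 d0
    have hQ1 := Q 2
    have hQ2 := Q 0
    linear_combination (e1 + e2 + 2*hQ1 - 2*hQ2 - c 1 * d0 + c 1 * d2 - (c 2 - c 0) * d1) / 2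
  have hc2 : c 2 = 0 := by
    have e1 := hEy 0 (v 1 - v 0)
    have e2 := hEy 1 (v 1 - v 0)
    simp only [Fin.reduceEq, reduceIte, Pi.sub_apply, one_mul, zero_mul, neg_mul, mul_zero,
      add_zero, zero_add, neg_zero, mul_neg] at e1 e2
    have d2 := hgd 2 1 0
    have d1 := hgd 1 1 0
    have d0 := hgd 0 1 0
    simp only [Fin.reduceEq, reduceIte] at d2 d1 d0
    have hQ1 := Q 0
    have hQ2 := Q 1
    linear_combination (e1 + e2 + 2*hQ1 - 2*hQ2 - c 2 * d1 + c 2 * d0 - (c 0 - c 1) * d2) / 2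
  -- the gradient of q vanishes at the vertices
  have hE' : ∀ (j : Fin 3) (y : Vec2),
      (B0 + 2*C00*(v j 0) + C01 * (v j 1)) * y 0 + (B1 + C01 * (v j 0) + 2*C11*(v j 1)) * y 1 = 0 := by
    intro j y
    have h := hEy j y
    rw [hc0, hc1, hc2] at h
    linear_combination h
  have P0 : ∀ j : Fin 3, B0 + 2*C00*(v j 0) + C01 * (v j 1) = 0 := by
    intro j
    have h := hE' j ![1, 0]
    simp only [Matrix.cons_val_zero, Matrix.cons_val_one, Matrix.head_cons, mul_one, mul_zero,
      add_zero] at h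
    exact h
  have P1 : ∀ j : Fin 3, B1 + C01 * (v j 0) + 2*C11*(v j 1) = 0 := by
    intro j
    have h := hE' j ![0, 1]
    simp only [Matrix.cons_val_zero, Matrix.cons_val_one, Matrix.head_cons, mul_one, mul_zero,
      zero_add] at h
    exact h
  -- nondegeneracy of the triangle
  have A1 := hgd 1 1 0
  have A2 := hgd 1 2 0
  have A3 := hgd 2 1 0
  have A4 := hgd 2 2 0
  simp only [Fin.reduceEq, reduceIte] at A1 A2 A3 A4
  have hdet1 : (g 1 0 * g 2 1 - g 1 1 * g 2 0) *
      ((v 1 0 - v 0 0) * (v 2 1 - v 0 1) - (v 1 1 - v 0 1) * (v 2 0 - v 0 0)) = 1 := by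
    linear_combination (g 2 0 * (v 2 0 - v 0 0) + g 2 1 * (v 2 1 - v 0 1)) * A1 + A4 -
      (g 1 0 * (v 2 0 - v 0 0) + g 1 1 * (v 2 1 - v 0 1)) * A3
  have hdetne : ((v 1 0 - v 0 0) * (v 2 1 - v 0 1) - (v 1 1 - v 0 1) * (v 2 0 - v 0 0)) ≠ 0 := by
    intro h
    rw [h, mul_zero] at hdet1
    exact one_ne_zero hdet1.symm
  -- the quadratic coefficients vanish
  have hC00 : C00 = 0 := by
    have h : (2*C00) * ((v 1 0 - v 0 0) * (v 2 1 - v 0 1) - (v 1 1 - v 0 1) * (v 2 0 - v 0 0)) = 0 := by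
      linear_combination (v 2 1 - v 0 1) * P0 1 - (v 2 1 - v 0 1) * P0 0 -
        (v 1 1 - v 0 1) * P0 2 + (v 1 1 - v 0 1) * P0 0
    rcases mul_eq_zero.mp h with h' | h'
    · linarith
    · exact absurd h' hdetne
  have hC01 : C01 = 0 := by
    have h : C01 * ((v 1 0 - v 0 0) * (v 2 1 - v 0 1) - (v 1 1 - v 0 1) * (v 2 0 - v 0 0)) = 0 := by
      linear_combination (v 1 0 - v 0 0) * P0 2 - (v 1 0 - v 0 0) * P0 0 -
        (v 2 0 - v 0 0) * P0 1 + (v 2 0 - v 0 0) * P0 0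
    rcases mul_eq_zero.mp h with h' | h'
    · exact h'
    · exact absurd h' hdetne
  have hC11 : C11 = 0 := by
    have h : (2*C11) * ((v 1 0 - v 0 0) * (v 2 1 - v 0 1) - (v 1 1 - v 0 1) * (v 2 0 - v 0 0)) = 0 := by
      linear_combination (v 1 0 - v 0 0) * P1 2 - (v 1 0 - v 0 0) * P1 0 -
        (v 2 0 - v 0 0) * P1 1 + (v 2 0 - v 0 0) * P1 0
    rcases mul_eq_zero.mp h with h' | h'
    · linarith
    · exact absurd h' hdetne
  have hB0 : B0 = 0 := by linear_combination P0 0 - 2*(v 0 0)*hC00 - (v 0 1)*hC01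
  have hB1 : B1 = 0 := by linear_combination P1 0 - (v 0 0)*hC01 - 2*(v 0 1)*hC11
  have hA : A = 0 := by
    linear_combination Q 0 - (v 0 0)*hB0 - (v 0 1)*hB1 - ((v 0 0)^2)*hC00 -
      (v 0 0 * v 0 1)*hC01 - ((v 0 1)^2)*hC11
  have hqz : ∀ x, q x = 0 := by
    intro x
    rw [rep x, hA, hB0, hB1, hC00, hC01, hC11]
    ring
  refine ⟨fun x _ => ?_, hqz, fun i => ?_⟩
  · rw [hvf x, hqz x, hc0, hc1, hc2]; ring
  · fin_cases i
    · exact hc0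
    · exact hc1
    · exact hc2
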